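/- Let F : ℝ → ℝ be of class C² with F(t) ≥ 0 for all t, and suppose liminf_{|t|→∞} F(t)/t² ≥ α for some α > 0. Then for any T > 0 and any q < √(2α), the energy J_q is bounded from below on A_T; that is, there exists m ∈ ℝ such that J_q(u) ≥ m for every C² function u : [0,T] → ℝ with u'(0) = u'(T) = 0. -/

import Mathlib

open Filter Real intervalIntegral

/-- Let `F` be `C²`, nonnegative, with `liminf_{|t|→∞} F(t)/t² ≥ α` for
some `α > 0`. Then for any `T > 0` and any `q < √(2α)` the energy `J_q` is bounded from
below on `A_T = { u ∈ C²([0,T]) : u'(0) = u'(T) = 0 }`. -/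
theorem stmt14 (F : ℝ → ℝ) (hF : ContDiff ℝ 2 F)
    (hFnonneg : ∀ t : ℝ, 0 ≤ F t)
    (α : ℝ) (hα : 0 < α)
    (hliminf : α ≤ Filter.liminf (fun t : ℝ => F t / t ^ 2) (Filter.atBot ⊔ Filter.atTop))
    (T : ℝ) (hT : 0 < T) (q : ℝ) (hq : q < Real.sqrt (2 * α)) :
    ∃ m : ℝ, ∀ u : ℝ → ℝ, ContDiff ℝ 2 u → deriv u 0 = 0 → deriv u T = 0 →
      m ≤ ∫ x in (0:ℝ)..T,
        ((iteratedDeriv 2 u x) ^ 2 / 2 - q * (deriv u x) ^ 2 / 2 + F (u x)) := by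
  -- Step 1: get R such that |t| > R implies F t / t² > α/2
  have hbdd : IsBoundedUnder (· ≥ ·) (atBot ⊔ atTop : Filter ℝ)
      (fun t : ℝ => F t / t ^ 2) :=
    Filter.isBoundedUnder_of ⟨0, fun t => div_nonneg (hFnonneg t) (sq_nonneg t)⟩
  have hev : ∀ᶠ t in (atBot ⊔ atTop : Filter ℝ), α / 2 < F t / t ^ 2 :=
    eventually_lt_of_lt_liminf (lt_of_lt_of_le (by linarith) hliminf) hbdd
  rw [eventually_sup] at hev
  obtain ⟨hbot, htop⟩ := hev
  rw [eventually_atBot] at hbot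
  rw [eventually_atTop] at htop
  obtain ⟨R₁, hR₁⟩ := hbot
  obtain ⟨R₂, hR₂⟩ := htop
  set R : ℝ := max |R₁| |R₂| + 1 with hRdef
  have hR0 : 0 < R := by positivity
  have hlow : ∀ t : ℝ, F t ≥ α / 4 * t ^ 2 - α / 4 * R ^ 2 := by
    intro t
    rcases le_or_gt (|t|) R with h | h
    · have ht2 : t ^ 2 ≤ R ^ 2 := by
        rw [← sq_abs t]; exact pow_le_pow_left₀ (abs_nonneg t) h 2
      nlinarith [hFnonneg t,
        mul_nonneg (by linarith : (0:ℝ) ≤ α / 4) (by linarith : (0:ℝ) ≤ R ^ 2 - t ^ 2)]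
    · have htabs : 0 < |t| := lt_trans hR0 h
      have ht2pos : (0:ℝ) < t ^ 2 := by rw [← sq_abs]; exact pow_pos htabs 2
      have hlt : α / 2 < F t / t ^ 2 := by
        rcases le_or_gt t 0 with h0 | h0
        · refine hR₁ t ?_
          have h2 : R < -t := by rwa [abs_of_nonpos h0] at h
          linarith [neg_abs_le R₁, le_max_left |R₁| |R₂|]
        · refine hR₂ t ?_
          have h2 : R < t := by rwa [abs_of_pos h0] at h
          linarith [le_abs_self R₂, le_max_right |R₁| |R₂|]
      have := (lt_div_iff₀ ht2pos).mp (by linarith : α / 4 < F t / t ^ 2)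
      nlinarith [mul_nonneg (by linarith : (0:ℝ) ≤ α / 4) (sq_nonneg R)]
  set C : ℝ := α / 4 * R ^ 2 with hC
  have hC0 : 0 ≤ C := by positivity
  refine ⟨-(C * T), fun u hu h0 hTd => ?_⟩
  -- continuity facts
  have hucont : Continuous u := hu.continuous
  have hu' : ContDiff ℝ 1 (deriv u) := by
    have h2 : ContDiff ℝ ((1:WithTop ℕ∞) + 1) u := by
      rw [show ((1:WithTop ℕ∞) + 1) = 2 by norm_num]; exact hu
    exact (contDiff_succ_iff_deriv.mp h2).2.2
  have hdu_cont : Continuous (deriv u) := hu'.continuous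
  have hddu_cont : Continuous (deriv (deriv u)) := hu'.continuous_deriv le_rfl
  have hiter : iteratedDeriv 2 u = deriv (deriv u) := by
    rw [show (2:ℕ) = 1 + 1 from rfl, iteratedDeriv_succ, iteratedDeriv_one]
  -- integrability
  have int1 : IntervalIntegrable (fun x => (deriv (deriv u) x) ^ 2 / 2 + F (u x))
      MeasureTheory.volume 0 T :=
    (((hddu_cont.pow 2).div_const 2).add (hF.continuous.comp hucont)).intervalIntegrable 0 T
  have int2 : IntervalIntegrable (fun x => (deriv u x) ^ 2) MeasureTheory.volume 0 T :=
    (hdu_cont.pow 2).intervalIntegrable 0 T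
  have int3 : IntervalIntegrable (fun x => F (u x) - q ^ 2 / 8 * (u x) ^ 2)
      MeasureTheory.volume 0 T :=
    ((hF.continuous.comp hucont).sub ((continuous_const.mul (hucont.pow 2)))).intervalIntegrable 0 T
  have intA : IntervalIntegrable (deriv u) MeasureTheory.volume 0 T :=
    hdu_cont.intervalIntegrable 0 T
  have intB : IntervalIntegrable (deriv (deriv u)) MeasureTheory.volume 0 T :=
    hddu_cont.intervalIntegrable 0 T
  have int6 : IntervalIntegrable (fun x => u x * deriv (deriv u) x)
      MeasureTheory.volume 0 T := (hucont.mul hddu_cont).intervalIntegrable 0 T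
  have int7 : IntervalIntegrable (fun x => (deriv (deriv u) x) ^ 2 / 2
      + q ^ 2 / 8 * (u x) ^ 2) MeasureTheory.volume 0 T :=
    (((hddu_cont.pow 2).div_const 2).add
      (continuous_const.mul (hucont.pow 2))).intervalIntegrable 0 T
  -- rewrite integrand
  have key : (∫ x in (0:ℝ)..T,
      ((iteratedDeriv 2 u x) ^ 2 / 2 - q * (deriv u x) ^ 2 / 2 + F (u x)))
      = (∫ x in (0:ℝ)..T, ((deriv (deriv u) x) ^ 2 / 2 + F (u x)))
        - q / 2 * ∫ x in (0:ℝ)..T, (deriv u x) ^ 2 := by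
    rw [← intervalIntegral.integral_const_mul, ← intervalIntegral.integral_sub int1
      (int2.const_mul (q/2))]
    congr 1
    funext x
    rw [hiter]
    ring
  rw [key]
  rcases le_or_gt q 0 with hq0 | hq0
  · -- q ≤ 0 : everything nonneg
    have h1 : (0:ℝ) ≤ ∫ x in (0:ℝ)..T, ((deriv (deriv u) x) ^ 2 / 2 + F (u x)) := by
      apply intervalIntegral.integral_nonneg hT.le
      intro x _
      have := hFnonneg (u x)
      positivity
    have h2 : (0:ℝ) ≤ ∫ x in (0:ℝ)..T, (deriv u x) ^ 2 :=
      intervalIntegral.integral_nonneg hT.le fun x _ => sq_nonneg _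
    nlinarith [mul_nonneg (neg_nonneg.mpr hq0) h2, mul_nonneg hC0 hT.le]
  · -- q > 0 : integration by parts + AM-GM
    have hq2 : q ^ 2 / 8 ≤ α / 4 := by
      have := (Real.lt_sqrt hq0.le).mp hq
      linarith
    have tail : -(C * T) ≤ ∫ x in (0:ℝ)..T, (F (u x) - q ^ 2 / 8 * (u x) ^ 2) := by
      have hmono : (∫ x in (0:ℝ)..T, (-C : ℝ))
          ≤ ∫ x in (0:ℝ)..T, (F (u x) - q ^ 2 / 8 * (u x) ^ 2) := by
        apply intervalIntegral.integral_mono_on hT.le (intervalIntegrable_const) int3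
        intro x _
        have h1 := hlow (u x)
        have h2 : q ^ 2 / 8 * (u x) ^ 2 ≤ α / 4 * (u x) ^ 2 :=
          mul_le_mul_of_nonneg_right hq2 (sq_nonneg _)
        linarith
      rwa [intervalIntegral.integral_const, smul_eq_mul, sub_zero, mul_comm, neg_mul] at hmono
    have parts : (∫ x in (0:ℝ)..T, u x * deriv (deriv u) x)
        = -∫ x in (0:ℝ)..T, (deriv u x) ^ 2 := by
      have hderiv1 : ∀ x ∈ Set.uIcc (0:ℝ) T, HasDerivAt u (deriv u x) x := fun x _ =>
        (hu.differentiable (by norm_num) x).hasDerivAt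
      have hderiv2 : ∀ x ∈ Set.uIcc (0:ℝ) T, HasDerivAt (deriv u) (deriv (deriv u) x) x :=
        fun x _ => (hu'.differentiable one_ne_zero x).hasDerivAt
      rw [intervalIntegral.integral_mul_deriv_eq_deriv_mul hderiv1 hderiv2 intA intB,
        h0, hTd]
      simp only [mul_zero, sub_zero, zero_sub, neg_inj]
      congr 1
      funext x
      ring
    have amgm : q / 2 * (∫ x in (0:ℝ)..T, (deriv u x) ^ 2)
        ≤ ∫ x in (0:ℝ)..T, ((deriv (deriv u) x) ^ 2 / 2 + q ^ 2 / 8 * (u x) ^ 2) := by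
      have h1 : q / 2 * (∫ x in (0:ℝ)..T, (deriv u x) ^ 2)
          = ∫ x in (0:ℝ)..T, (-(q / 2) * (u x * deriv (deriv u) x)) := by
        rw [intervalIntegral.integral_const_mul, parts]; ring
      rw [h1]
      apply intervalIntegral.integral_mono_on hT.le (int6.const_mul _) int7
      intro x _
      nlinarith [sq_nonneg (deriv (deriv u) x + (q/2) * u x),
        sq_nonneg (deriv (deriv u) x - (q/2) * u x)]
    have split : (∫ x in (0:ℝ)..T, ((deriv (deriv u) x) ^ 2 / 2 + F (u x)))
        - (∫ x in (0:ℝ)..T, ((deriv (deriv u) x) ^ 2 / 2 + q ^ 2 / 8 * (u x) ^ 2))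
        = ∫ x in (0:ℝ)..T, (F (u x) - q ^ 2 / 8 * (u x) ^ 2) := by
      rw [← intervalIntegral.integral_sub int1 int7]
      congr 1
      funext x
      ring
    linarith
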